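/- If a matching in the acceptability graph saturates the lexicographically optimal matchable set of institutions (with respect to a fixed permutation of institutions), then it is a maximum-cardinality matching. -/

import Mathlib

open scoped Classical

variable {N D : Type*} [Fintype N] [Fintype D] [DecidableEq N] [DecidableEq D]

/-- Neighborhood of a set of institutions: agents adjacent to some institution in `T`. -/
noncomputable def nbr (adj : D → N → Prop) (T : Finset D) : Finset N :=
  Finset.univ.filter fun a => ∃ d ∈ T, adj d a

/-- `T` is equal-acceptable: exactly as many neighbors as institutions. -/
def equalAcc (adj : D → N → Prop) (T : Finset D) : Prop :=
  (nbr adj T).card = T.card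

/-- A safe block: a nonempty equal-acceptable set with no nonempty proper
equal-acceptable subset. -/
def safeBlock (adj : D → N → Prop) (S : Finset D) : Prop :=
  S.Nonempty ∧ equalAcc adj S ∧ ∀ S' ⊂ S, S'.Nonempty → ¬ equalAcc adj S'

/-- `M` is a matching of the bipartite graph restricted to institutions `Dbar`. -/
def isMatching (adj : D → N → Prop) (Dbar : Finset D) (M : Finset (D × N)) : Prop :=
  (∀ p ∈ M, p.1 ∈ Dbar ∧ adj p.1 p.2) ∧
  (∀ p ∈ M, ∀ q ∈ M, p.1 = q.1 → p = q) ∧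
  (∀ p ∈ M, ∀ q ∈ M, p.2 = q.2 → p = q)

/-- Number of edges of rank `r` in matching `M`, where an edge's rank is the rank of
its institution under `rk`. -/
noncomputable def sigCount (rk : D → ℕ) (M : Finset (D × N)) (r : ℕ) : ℕ :=
  (M.filter fun p => rk p.1 = r).card

/-- The signature of `M'` is lexicographically strictly better than that of `M`. -/
def sigBetter (rk : D → ℕ) (M' M : Finset (D × N)) : Prop :=
  ∃ r, (∀ s < r, sigCount rk M' s = sigCount rk M s) ∧ sigCount rk M r < sigCount rk M' r

/-- `M` is a rank-maximal matching: no matching has a lexicographically better signature. -/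
def rankMaximal (adj : D → N → Prop) (rk : D → ℕ) (M : Finset (D × N)) : Prop :=
  isMatching adj Finset.univ M ∧
    ∀ M' : Finset (D × N), isMatching adj Finset.univ M' → ¬ sigBetter rk M' M

/-- A set of institutions is matchable: some matching saturates it. -/
def matchable (adj : D → N → Prop) (S : Finset D) : Prop :=
  ∃ M : Finset (D × N), isMatching adj Finset.univ M ∧ ∀ d ∈ S, ∃ a, (d, a) ∈ M

/-- `S` is lexicographically strictly better than `T` with respect to ranking `rk`. -/
def setLexBetter (rk : D → ℕ) (S T : Finset D) : Prop :=
  ∃ d, d ∈ S ∧ d ∉ T ∧ ∀ d', rk d' < rk d → (d' ∈ S ↔ d' ∈ T)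


/-- The greedy lexi-optimal matchable set: process institutions in the order of the
list `L`, adding an institution whenever the result remains matchable. -/
noncomputable def greedySet (adj : D → N → Prop) (L : List D) : Finset D :=
  L.foldl (fun W d => if matchable adj (insert d W) then insert d W else W) ∅

-- basic nbr lemmas
lemma nbr_mono (adj : D → N → Prop) {A B : Finset D} (h : A ⊆ B) :
    nbr adj A ⊆ nbr adj B := by
  intro a ha
  simp only [nbr, Finset.mem_filter, Finset.mem_univ, true_and] at ha ⊢
  obtain ⟨d, hd, hadj⟩ := ha
  exact ⟨d, h hd, hadj⟩

lemma nbr_union (adj : D → N → Prop) (A B : Finset D) :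
    nbr adj (A ∪ B) = nbr adj A ∪ nbr adj B := by
  ext a
  simp only [nbr, Finset.mem_filter, Finset.mem_univ, true_and, Finset.mem_union]
  constructor
  · rintro ⟨d, hd, hadj⟩
    rcases hd with h | h
    · exact Or.inl ⟨d, h, hadj⟩
    · exact Or.inr ⟨d, h, hadj⟩
  · rintro (⟨d, hd, hadj⟩ | ⟨d, hd, hadj⟩)
    · exact ⟨d, Or.inl hd, hadj⟩
    · exact ⟨d, Or.inr hd, hadj⟩

-- downward closure
lemma matchable_subset {adj : D → N → Prop} {S T : Finset D}
    (h : matchable adj S) (hTS : T ⊆ S) : matchable adj T := by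
  obtain ⟨M, hM, hs⟩ := h
  exact ⟨M, hM, fun d hd => hs d (hTS hd)⟩

lemma matchable_empty (adj : D → N → Prop) : matchable adj (∅ : Finset D) :=
  ⟨∅, ⟨fun p hp => absurd hp (Finset.notMem_empty p),
      fun p hp => absurd hp (Finset.notMem_empty p),
      fun p hp => absurd hp (Finset.notMem_empty p)⟩,
    fun d hd => absurd hd (Finset.notMem_empty d)⟩

-- easy Hall direction: subsets of a set saturated by a matching satisfy Hall
lemma hall_of_saturated {adj : D → N → Prop} {S : Finset D} {M : Finset (D × N)}
    (hM : isMatching adj Finset.univ M) (hsat : ∀ d ∈ S, ∃ a, (d, a) ∈ M)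
    {T : Finset D} (hTS : T ⊆ S) : T.card ≤ (nbr adj T).card := by
  rcases T.eq_empty_or_nonempty with rfl | ⟨t0, ht0⟩
  · simp
  have hex : ∀ d ∈ T, ∃ a, (d, a) ∈ M := fun d hd => hsat d (hTS hd)
  let g : D → N := fun d => if h : ∃ a, (d, a) ∈ M then h.choose else (hex t0 ht0).choose
  have hg : ∀ d ∈ T, (d, g d) ∈ M := by
    intro d hd
    have h := hex d hd
    simp only [g, dif_pos h]
    exact h.choose_spec
  apply Finset.card_le_card_of_injOn g
  · intro d hd
    simp only [nbr, Finset.mem_coe, Finset.mem_filter, Finset.mem_univ, true_and]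
    exact ⟨d, hd, (hM.1 _ (hg d hd)).2⟩
  · intro d hd d' hd' hgg
    have := hM.2.2 _ (hg d hd) _ (hg d' hd') hgg
    exact congrArg Prod.fst this

-- hard Hall direction
lemma matchable_of_hall {adj : D → N → Prop} {S : Finset D}
    (h : ∀ T ⊆ S, T.card ≤ (nbr adj T).card) : matchable adj S := by
  have key : ∀ s : Finset {d // d ∈ S},
      s.card ≤ (s.biUnion fun x => Finset.univ.filter (adj x.1)).card := by
    intro s
    have h1 : s.card = (s.image Subtype.val).card :=
      (Finset.card_image_of_injective s Subtype.val_injective).symm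
    have h2 : (s.biUnion fun x => Finset.univ.filter (adj x.1)) =
        nbr adj (s.image Subtype.val) := by
      ext a
      simp only [Finset.mem_biUnion, Finset.mem_filter, Finset.mem_univ, true_and, nbr,
        Finset.mem_image]
      constructor
      · rintro ⟨x, hx, hadj⟩; exact ⟨x.1, ⟨x, hx, rfl⟩, hadj⟩
      · rintro ⟨d, ⟨x, hx, rfl⟩, hadj⟩; exact ⟨x, hx, hadj⟩
    rw [h1, h2]
    apply h
    intro d hd
    obtain ⟨x, _, rfl⟩ := Finset.mem_image.mp hd
    exact x.2
  obtain ⟨f, hfinj, hf⟩ :=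
    (Finset.all_card_le_biUnion_card_iff_existsInjective'
      (fun x : {d // d ∈ S} => Finset.univ.filter (adj x.1))).mp key
  refine ⟨S.attach.image fun x => (x.1, f x), ⟨?_, ?_, ?_⟩, ?_⟩
  · rintro p hp
    obtain ⟨x, _, rfl⟩ := Finset.mem_image.mp hp
    have := hf x
    simp only [Finset.mem_filter] at this
    exact ⟨Finset.mem_univ _, this.2⟩
  · rintro p hp q hq hpq
    obtain ⟨x, _, rfl⟩ := Finset.mem_image.mp hp
    obtain ⟨y, _, rfl⟩ := Finset.mem_image.mp hq
    have : x = y := Subtype.ext hpq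
    rw [this]
  · rintro p hp q hq hpq
    obtain ⟨x, _, rfl⟩ := Finset.mem_image.mp hp
    obtain ⟨y, _, rfl⟩ := Finset.mem_image.mp hq
    have : x = y := hfinj hpq
    rw [this]
  · intro d hd
    exact ⟨f ⟨d, hd⟩, Finset.mem_image.mpr ⟨⟨d, hd⟩, S.mem_attach _, rfl⟩⟩

-- the exchange / maximality lemma
lemma card_le_of_maximal {adj : D → N → Prop} {S W : Finset D}
    (hS : matchable adj S) (hW : matchable adj W)
    (hmax : ∀ d, d ∉ W → ¬ matchable adj (insert d W)) :
    S.card ≤ W.card := by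
  -- Hall for subsets of W
  obtain ⟨MW, hMW, hWsat⟩ := hW
  have hallW : ∀ T ⊆ W, T.card ≤ (nbr adj T).card :=
    fun T hT => hall_of_saturated hMW hWsat hT
  -- for each d ∈ S \ W a tight set
  have tight : ∀ d ∈ S \ W, ∃ T : Finset D, T ⊆ W ∧ (nbr adj T).card ≤ T.card ∧
      nbr adj {d} ⊆ nbr adj T := by
    intro d hd
    have hdW : d ∉ W := (Finset.mem_sdiff.mp hd).2
    have hnm := hmax d hdW
    have : ¬ ∀ T ⊆ insert d W, T.card ≤ (nbr adj T).card := by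
      intro hc
      exact hnm (matchable_of_hall hc)
    push_neg at this
    obtain ⟨T, hTW, hcard⟩ := this
    have hdT : d ∈ T := by
      by_contra hdT
      have : T ⊆ W := fun x hx => by
        rcases Finset.mem_insert.mp (hTW hx) with rfl | h
        · exact absurd hx hdT
        · exact h
      exact absurd (hallW T this) (not_le.mpr hcard)
    set T' := T.erase d with hT'
    have hT'W : T' ⊆ W := by
      intro x hx
      have hx' := Finset.mem_erase.mp hx
      rcases Finset.mem_insert.mp (hTW hx'.2) with rfl | h
      · exact absurd rfl hx'.1
      · exact h
    have hTeq : T = insert d T' := (Finset.insert_erase hdT).symm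
    have hTcard : T.card = T'.card + 1 := by
      rw [hTeq, Finset.card_insert_of_notMem (Finset.notMem_erase _ _)]
    have hsub : nbr adj T' ⊆ nbr adj T := nbr_mono adj (Finset.erase_subset _ _)
    have h1 : (nbr adj T).card ≤ T'.card := by omega
    refine ⟨T', hT'W, le_trans (Finset.card_le_card hsub) h1 |>.trans (le_refl _), ?_⟩
    · intro a ha
      apply nbr_mono adj (show ({d} : Finset D) ⊆ T by
        intro x hx; rw [Finset.mem_singleton.mp hx]; exact hdT) at ha
      -- need nbr T ⊆ nbr T' : since nbr T' ⊆ nbr T and cards force equality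
      have hcards : (nbr adj T).card ≤ (nbr adj T').card :=
        le_trans h1 (hallW T' hT'W)
      have : nbr adj T' = nbr adj T := Finset.eq_of_subset_of_card_le hsub hcards
      rw [this]; exact ha
  choose Td hTd1 hTd2 hTd3 using tight
  -- union of tight sets
  classical
  let U : Finset D := (S \ W).attach.biUnion fun x => Td x.1 x.2
  have hUW : U ⊆ W := by
    intro x hx
    obtain ⟨y, _, hxy⟩ := Finset.mem_biUnion.mp hx
    exact hTd1 y.1 y.2 hxy
  -- |nbr U| ≤ |U| by induction (submodularity)
  have subadd : ∀ (F : Finset {x // x ∈ S \ W}),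
      (nbr adj (F.biUnion fun x => Td x.1 x.2)).card ≤
        (F.biUnion fun x => Td x.1 x.2).card := by
    intro F
    induction F using Finset.induction_on with
    | empty =>
      simp only [Finset.biUnion_empty]
      have : nbr adj (∅ : Finset D) = ∅ := by
        ext a; simp [nbr]
      simp [this]
    | @insert x F' hx ih =>
      rw [Finset.biUnion_insert]
      set A := Td x.1 x.2 with hA
      set B := F'.biUnion fun x => Td x.1 x.2 with hB
      have hBW : B ⊆ W := by
        intro y hy
        obtain ⟨z, _, hz⟩ := Finset.mem_biUnion.mp hy
        exact hTd1 z.1 z.2 hz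
      have hAW : A ⊆ W := hTd1 x.1 x.2
      have hinter : A ∩ B ⊆ W := le_trans (Finset.inter_subset_left) hAW
      have h1 : nbr adj (A ∩ B) ⊆ nbr adj A ∩ nbr adj B :=
        Finset.subset_inter (nbr_mono adj Finset.inter_subset_left)
          (nbr_mono adj Finset.inter_subset_right)
      have h2 : (nbr adj (A ∪ B)).card + (A ∩ B).card ≤ A.card + B.card := by
        calc (nbr adj (A ∪ B)).card + (A ∩ B).card
            ≤ (nbr adj A ∪ nbr adj B).card + (nbr adj (A ∩ B)).card := by
              rw [nbr_union]
              exact Nat.add_le_add (le_refl _) (hallW _ hinter)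
          _ ≤ (nbr adj A ∪ nbr adj B).card + (nbr adj A ∩ nbr adj B).card :=
              Nat.add_le_add (le_refl _) (Finset.card_le_card h1)
          _ = (nbr adj A).card + (nbr adj B).card :=
              Finset.card_union_add_card_inter _ _
          _ ≤ A.card + B.card := Nat.add_le_add (hTd2 x.1 x.2) ih
      have h3 : (A ∪ B).card + (A ∩ B).card = A.card + B.card :=
        Finset.card_union_add_card_inter _ _
      omega
  have hUcard : (nbr adj U).card ≤ U.card := subadd _
  -- nbr (S \ W) ⊆ nbr U
  have hnbrSW : nbr adj (S \ W) ⊆ nbr adj U := by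
    intro a ha
    simp only [nbr, Finset.mem_filter, Finset.mem_univ, true_and] at ha
    obtain ⟨d, hd, hadj⟩ := ha
    have ha' : a ∈ nbr adj {d} := by
      simp only [nbr, Finset.mem_filter, Finset.mem_univ, true_and]
      exact ⟨d, Finset.mem_singleton_self d, hadj⟩
    have := hTd3 d hd ha'
    apply nbr_mono adj (show Td d hd ⊆ U by
      intro y hy
      exact Finset.mem_biUnion.mpr ⟨⟨d, hd⟩, Finset.mem_attach _ _, hy⟩) at this
    exact this
  -- Hall for subsets of S
  obtain ⟨MS, hMS, hSsat⟩ := hS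
  have hallS : ∀ T ⊆ S, T.card ≤ (nbr adj T).card :=
    fun T hT => hall_of_saturated hMS hSsat hT
  -- final count with A := (S\W) ∪ (U ∩ S)
  set A := (S \ W) ∪ (U ∩ S) with hAdef
  have hAS : A ⊆ S :=
    Finset.union_subset (Finset.sdiff_subset) (Finset.inter_subset_right)
  have hAcard : A.card ≤ U.card := by
    have h1 : A.card ≤ (nbr adj A).card := hallS A hAS
    have h2 : nbr adj A ⊆ nbr adj U := by
      rw [hAdef, nbr_union]
      exact Finset.union_subset hnbrSW (nbr_mono adj Finset.inter_subset_left)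
    calc A.card ≤ (nbr adj A).card := h1
      _ ≤ (nbr adj U).card := Finset.card_le_card h2
      _ ≤ U.card := hUcard
  have hdisj : Disjoint (S \ W) (U ∩ S) := by
    apply Finset.disjoint_left.mpr
    intro x hx hx'
    exact (Finset.mem_sdiff.mp hx).2 (hUW (Finset.mem_inter.mp hx').1)
  have hAcard2 : A.card = (S \ W).card + (U ∩ S).card :=
    Finset.card_union_of_disjoint hdisj
  have hUsplit : U.card = (U ∩ S).card + (U \ S).card :=
    (Finset.card_inter_add_card_sdiff U S).symm
  have hSWle : (S \ W).card ≤ (U \ S).card := by omega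
  have hUS : U \ S ⊆ W \ S := Finset.sdiff_subset_sdiff hUW (le_refl _)
  have hfin : (S \ W).card ≤ (W \ S).card :=
    le_trans hSWle (Finset.card_le_card hUS)
  have h1 : S.card = (S \ W).card + (S ∩ W).card :=
    (Finset.card_sdiff_add_card_inter S W).symm
  have h2 : W.card = (W \ S).card + (W ∩ S).card :=
    (Finset.card_sdiff_add_card_inter W S).symm
  have h3 : (S ∩ W).card = (W ∩ S).card := by rw [Finset.inter_comm]
  omega

lemma greedy_foldl_props (adj : D → N → Prop) :
    ∀ (L : List D) (W0 : Finset D), matchable adj W0 →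
      matchable adj (L.foldl (fun W d => if matchable adj (insert d W) then insert d W else W) W0) ∧
      W0 ⊆ (L.foldl (fun W d => if matchable adj (insert d W) then insert d W else W) W0) ∧
      ∀ d ∈ L, d ∉ (L.foldl (fun W d => if matchable adj (insert d W) then insert d W else W) W0) →
        ¬ matchable adj (insert d (L.foldl (fun W d => if matchable adj (insert d W) then insert d W else W) W0)) := by
  intro L
  induction L with
  | nil => intro W0 h; exact ⟨h, by simp, by simp⟩
  | cons d L ih =>
    intro W0 h
    simp only [List.foldl_cons]
    by_cases hd : matchable adj (insert d W0)
    · rw [if_pos hd]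
      obtain ⟨h1, h2, h3⟩ := ih (insert d W0) hd
      refine ⟨h1, le_trans (Finset.subset_insert d W0) h2, ?_⟩
      intro e he hne
      rcases List.mem_cons.mp he with rfl | he'
      · exact absurd (h2 (Finset.mem_insert_self e W0)) hne
      · exact h3 e he' hne
    · rw [if_neg hd]
      obtain ⟨h1, h2, h3⟩ := ih W0 h
      refine ⟨h1, h2, ?_⟩
      intro e he hne
      rcases List.mem_cons.mp he with rfl | he'
      · intro hc
        apply hd
        apply matchable_subset hc
        exact Finset.insert_subset_insert _ h2
      · exact h3 e he' hne

lemma greedy_matchable (adj : D → N → Prop) (L : List D) :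
    matchable adj (greedySet adj L) :=
  (greedy_foldl_props adj L ∅ (matchable_empty adj)).1

lemma greedy_maximal (adj : D → N → Prop) (L : List D) (hall : ∀ d : D, d ∈ L) :
    ∀ d, d ∉ greedySet adj L → ¬ matchable adj (insert d (greedySet adj L)) := by
  intro d hd
  exact (greedy_foldl_props adj L ∅ (matchable_empty adj)).2.2 d (hall d) hd


/-- Any matching saturating the greedily-built lexi-optimal matchable set of institutions
is a maximum-cardinality matching. -/
theorem saturating_lexopt_is_maximum (adj : D → N → Prop) (L : List D)
    (hnd : L.Nodup) (hall : ∀ d : D, d ∈ L)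
    (M : Finset (D × N)) (hM : isMatching adj Finset.univ M)
    (hsat : ∀ d ∈ greedySet adj L, ∃ a, (d, a) ∈ M) :
    ∀ M' : Finset (D × N), isMatching adj Finset.univ M' → M'.card ≤ M.card := by
  intro M' hM'
  set W := greedySet adj L with hW
  -- card of a matching = card of its institution image
  have cardeq : ∀ (K : Finset (D × N)), isMatching adj Finset.univ K →
      K.card = (K.image Prod.fst).card := by
    intro K hK
    rw [Finset.card_image_of_injOn]
    intro p hp q hq hpq
    exact hK.2.1 p hp q hq hpq
  -- M' institutions matchable
  have hm' : matchable adj (M'.image Prod.fst) := by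
    refine ⟨M', hM', ?_⟩
    intro d hd
    obtain ⟨p, hp, rfl⟩ := Finset.mem_image.mp hd
    exact ⟨p.2, hp⟩
  have key : (M'.image Prod.fst).card ≤ W.card :=
    card_le_of_maximal hm' (greedy_matchable adj L) (greedy_maximal adj L hall)
  have hWM : W.card ≤ M.card := by
    have : W ⊆ M.image Prod.fst := by
      intro d hd
      obtain ⟨a, ha⟩ := hsat d hd
      exact Finset.mem_image.mpr ⟨(d, a), ha, rfl⟩
    calc W.card ≤ (M.image Prod.fst).card := Finset.card_le_card this
      _ ≤ M.card := Finset.card_image_le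
  calc M'.card = (M'.image Prod.fst).card := cardeq M' hM'
    _ ≤ W.card := key
    _ ≤ M.card := hWM
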